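/- For every positive integer t, setting d = 2^{2t+1}, there exists a set of d mutually quasi-unbiased weighing matrices for parameters (d, d, d/2, 2d); that is, the upper bound f ≤ d for such sets is attained. -/

import Mathlib

open Matrix

/-- `W` is a weighing matrix of order `d` and weight `k`: a `d × d` real matrix with all
entries in `{-1, 0, 1}` such that `W * Wᵀ = k • 1`. -/
def IsWeighing {d : ℕ} (k : ℝ) (W : Matrix (Fin d) (Fin d) ℝ) : Prop :=
  (∀ i j, W i j = -1 ∨ W i j = 0 ∨ W i j = 1) ∧
    W * Wᵀ = k • (1 : Matrix (Fin d) (Fin d) ℝ)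

/-- A family of mutually unbiased weighing matrices of order `d` and weight `k`:
each member is a weighing matrix of weight `k`, and for distinct members
`(1/√k) • (Wᵢ * Wⱼᵀ)` is again a weighing matrix of weight `k`. -/
def MUWM {d f : ℕ} (k : ℝ) (W : Fin f → Matrix (Fin d) (Fin d) ℝ) : Prop :=
  (∀ i, IsWeighing k (W i)) ∧
    ∀ i j, i ≠ j → IsWeighing k ((Real.sqrt k)⁻¹ • (W i * (W j)ᵀ))

/-- A family of mutually quasi-unbiased weighing matrices for parameters `(d, k, l, a)`:
each member is a weighing matrix of weight `k`, and for distinct members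
`(1/√a) • (Wᵢ * Wⱼᵀ)` is a weighing matrix of weight `l`. -/
def MQUWM {d f : ℕ} (k l a : ℝ) (W : Fin f → Matrix (Fin d) (Fin d) ℝ) : Prop :=
  (∀ i, IsWeighing k (W i)) ∧
    ∀ i j, i ≠ j → IsWeighing l ((Real.sqrt a)⁻¹ • (W i * (W j)ᵀ))

noncomputable section
namespace QUW
variable (n : ℕ)

abbrev F2 (n : ℕ) := GaloisField 2 n

instance : Fintype (F2 n) := Fintype.ofFinite _

lemma card_F2 (hn : n ≠ 0) : Fintype.card (F2 n) = 2 ^ n := by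
  rw [← Nat.card_eq_fintype_card, GaloisField.card 2 n hn]

def tr (x : F2 n) : ZMod 2 := Algebra.trace (ZMod 2) (F2 n) x

def chi (x : F2 n) : ℝ := if tr n x = 0 then 1 else -1

lemma chi_zero : chi n 0 = 1 := by simp [chi, tr]

lemma zmod2_cases : ∀ a : ZMod 2, a = 0 ∨ a = 1 := by decide

lemma chi_add (x y : F2 n) : chi n (x + y) = chi n x * chi n y := by
  have h11 : (1 + 1 : ZMod 2) = 0 := by decide
  unfold chi tr
  rw [map_add]
  rcases zmod2_cases (Algebra.trace (ZMod 2) (F2 n) x) with hx | hx <;>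
    rcases zmod2_cases (Algebra.trace (ZMod 2) (F2 n) y) with hy | hy <;>
      simp [hx, hy, h11]

lemma chi_cases (x : F2 n) : chi n x = 1 ∨ chi n x = -1 := by
  unfold chi; split <;> simp

lemma tr_sq (x : F2 n) : tr n (x ^ 2) = tr n x := by
  have hfrob : ∀ r : ZMod 2, (frobeniusEquiv (F2 n) 2) ((algebraMap (ZMod 2) (F2 n)) r)
      = (algebraMap (ZMod 2) (F2 n)) r := by
    intro r
    rw [frobeniusEquiv_def, ← map_pow]
    congr 1
    revert r; decide
  let e : F2 n ≃ₐ[ZMod 2] F2 n := AlgEquiv.ofRingEquiv hfrob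
  have := Algebra.trace_eq_of_algEquiv e x
  simpa [tr, e, AlgEquiv.ofRingEquiv, frobeniusEquiv_def, _root_.frobenius_def] using this

lemma tr_one (hodd : Odd n) : tr n 1 = 1 := by
  obtain ⟨m, hm⟩ := hodd
  have h2 := Algebra.trace_algebraMap (R := ZMod 2) (S := F2 n) (1 : ZMod 2)
  rw [RingHom.map_one] at h2
  unfold tr
  rw [h2, GaloisField.finrank 2 (by omega : n ≠ 0), nsmul_eq_mul, mul_one, hm]
  push_cast
  rw [show ((2:ZMod 2)) = 0 by decide]
  ring

lemma chi_one (hodd : Odd n) : chi n 1 = -1 := by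
  simp [chi, tr_one n hodd, show (1 : ZMod 2) ≠ 0 by decide]

lemma sum_chi : ∑ z : F2 n, chi n z = 0 := by
  obtain ⟨c, hc⟩ : ∃ c : F2 n, tr n c ≠ 0 := by
    have hnd := traceForm_nondegenerate (ZMod 2) (F2 n)
    by_contra hf
    push_neg at hf
    have : (1 : F2 n) = 0 := hnd.1 1 (fun y => by
      simpa [Algebra.traceForm_apply, tr] using hf y)
    exact one_ne_zero this
  have key : ∑ z : F2 n, chi n z = ∑ z : F2 n, chi n (z + c) :=
    (Fintype.sum_equiv (Equiv.addRight c) _ _ (fun z => rfl)).symm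
  have hcc : chi n c = -1 := by simp [chi, hc]
  have : ∑ z : F2 n, chi n z = -∑ z : F2 n, chi n z := by
    nth_rewrite 1 [key]
    simp [chi_add, hcc]
  linarith

lemma sum_chi_mul_zero (hn : n ≠ 0) :
    ∑ z : F2 n, chi n ((0 : F2 n) * z) = (2 ^ n : ℝ) := by
  simp [chi_zero, card_F2 n hn]

lemma sum_chi_mul_ne {b : F2 n} (h : b ≠ 0) :
    ∑ z : F2 n, chi n (b * z) = 0 := by
  exact (Fintype.sum_equiv (Equiv.mulLeft₀ b h) (fun z => chi n (b * z)) (chi n)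
    (fun z => rfl)).trans (sum_chi n)

lemma char2 : (2 : F2 n) = 0 := by
  have := CharP.cast_eq_zero (F2 n) 2
  simpa using this

lemma add_self (x : F2 n) : x + x = 0 := by
  have : (2 : F2 n) * x = 0 := by rw [char2, zero_mul]
  linear_combination this

lemma sq_inj : Function.Injective (fun x : F2 n => x ^ 2) := by
  intro x y h
  simp only at h
  have : (x + y) ^ 2 = 0 := by
    have h2 := char2 n
    linear_combination h + (x*y + y^2) * h2
  have hxy : x + y = 0 := by
    exact pow_eq_zero_iff (by norm_num) |>.mp this
  have := add_self n y
  linear_combination hxy - this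

lemma coprime3 (hodd : Odd n) : Nat.Coprime 3 (2 ^ n - 1) := by
  obtain ⟨m, hm⟩ := hodd
  subst hm
  rw [Nat.Prime.coprime_iff_not_dvd (by norm_num)]
  have h4 : 4 ^ m % 3 = 1 := by
    rw [Nat.pow_mod]; norm_num
  have h2 : 2 ^ (2 * m + 1) = 2 * 4 ^ m := by
    rw [pow_succ, pow_mul]; ring
  rw [h2]
  have hpos : 1 ≤ 4 ^ m := Nat.one_le_pow _ _ (by norm_num)
  omega

lemma cube_bij (hodd : Odd n) : Function.Bijective (fun u : F2 n => u ^ 3) := by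
  rw [← Finite.injective_iff_bijective]
  intro u v h
  simp only at h
  by_cases hv : v = 0
  · subst hv
    simpa using pow_eq_zero_iff (n := 3) (by norm_num) |>.mp (by simpa using h)
  by_cases hu : u = 0
  · subst hu
    exact absurd (pow_eq_zero_iff (n := 3) (by norm_num : (3:ℕ) ≠ 0) |>.mp
      (show v ^ 3 = 0 by simpa using h.symm)) hv
  · set w : (F2 n)ˣ := Units.mk0 u hu * (Units.mk0 v hv)⁻¹ with hw
    have hw3 : w ^ 3 = 1 := by
      ext
      push_cast [hw]
      rw [mul_pow, inv_pow, Units.val_mk0, Units.val_mk0, h, mul_inv_cancel₀ (pow_ne_zero 3 hv)]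
    have h1 : orderOf w ∣ 3 := orderOf_dvd_of_pow_eq_one hw3
    have hn0 : n ≠ 0 := by rintro rfl; have := Nat.odd_iff.mp hodd; omega
    have h2 : orderOf w ∣ 2 ^ n - 1 := by
      have := orderOf_dvd_natCard w
      rwa [Nat.card_units, GaloisField.card 2 n hn0] at this
    have : orderOf w ∣ 1 := by
      have := Nat.dvd_gcd h1 h2
      rwa [Nat.Coprime.gcd_eq_one (coprime3 n hodd)] at this
    have hww : w = 1 := orderOf_eq_one_iff.mp (Nat.dvd_one.mp this)
    have : Units.mk0 u hu = Units.mk0 v hv := by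
      rwa [mul_inv_eq_one] at hww
    simpa using congrArg Units.val this

end QUW

noncomputable section
namespace QUW
variable (n : ℕ)

def Esum (c a : F2 n) : ℝ := ∑ z : F2 n, chi n (c * z ^ 3 + a * z)

lemma chi_sq (y : F2 n) : chi n (y ^ 2) = chi n y := by
  unfold chi
  rw [show tr n (y ^ 2) = tr n y from tr_sq n y]

lemma add_eq_zero_iff' (x y : F2 n) : x + y = 0 ↔ x = y := by
  constructor
  · intro h
    have h3 := add_self n y
    linear_combination h - h3
  · rintro rfl
    exact add_self n x

lemma Esum_zero (hn0 : n ≠ 0) (a : F2 n) [Decidable (a = 0)] :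
    Esum n 0 a = if a = 0 then (2:ℝ) ^ n else 0 := by
  have h : ∀ z : F2 n, (0:F2 n) * z ^ 3 + a * z = a * z := by intro z; ring
  unfold Esum
  simp_rw [h]
  by_cases ha : a = 0
  · rw [if_pos ha, ha]
    simpa using sum_chi_mul_zero n hn0
  · rw [if_neg ha]
    exact sum_chi_mul_ne n ha


lemma Esum_sq (hodd : Odd n) {c : F2 n} (hc : c ≠ 0) (a : F2 n) :
    Esum n c a ^ 2 = 0 ∨ Esum n c a ^ 2 = 2 * 2 ^ n := by
  classical
  have hn0 : n ≠ 0 := by rintro rfl; have := Nat.odd_iff.mp hodd; omega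
  have h2 : (2 : F2 n) = 0 := char2 n
  obtain ⟨u₀, hu₀⟩ := (cube_bij n hodd).surjective c⁻¹
  simp only at hu₀
  have hu₀ne : u₀ ≠ 0 := by
    rintro rfl
    rw [zero_pow (by norm_num)] at hu₀
    exact hc (by simpa using congrArg (· * c) hu₀.symm)
  have hcu₀ : c * u₀ ^ 3 = 1 := by rw [hu₀, mul_inv_cancel₀ hc]
  have sqInj : Function.Injective (fun x : F2 n => x ^ 2) := sq_inj n
  -- inner sum computation
  have hT : ∀ u : F2 n, (∑ z : F2 n, chi n (c * u * z ^ 2 + c * u ^ 2 * z))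
      = if u = 0 ∨ u = u₀ then (2 ^ n : ℝ) else 0 := by
    intro u
    obtain ⟨β, hβ⟩ := ((Finite.injective_iff_bijective).mp (sq_inj n)).surjective (c * u)
    simp only at hβ
    have hz : ∀ z : F2 n, chi n (c * u * z ^ 2 + c * u ^ 2 * z)
        = chi n ((β + c * u ^ 2) * z) := by
      intro z
      rw [chi_add, show c * u * z ^ 2 = (β * z) ^ 2 by rw [mul_pow, hβ],
        chi_sq, ← chi_add]
      ring_nf
    simp_rw [hz]
    have hcond : (β + c * u ^ 2 = 0) ↔ (u = 0 ∨ u = u₀) := by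
      constructor
      · intro h
        have hβval : β = c * u ^ 2 := by
          have h3 := add_self n (c * u ^ 2)
          linear_combination h - h3
        have hsq : c * u = c ^ 2 * u ^ 4 := by
          calc c * u = β ^ 2 := hβ.symm
          _ = c ^ 2 * u ^ 4 := by rw [hβval]; ring
        by_cases hu : u = 0
        · exact Or.inl hu
        · right
          have hne : c * u ≠ 0 := mul_ne_zero hc hu
          have hcu3 : c * u ^ 3 = 1 := by
            have h1 : c * u * (c * u ^ 3) = c * u * 1 := by linear_combination -hsq
            exact mul_left_cancel₀ hne h1
          have h3 : u ^ 3 = u₀ ^ 3 := by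
            rw [hu₀]
            exact eq_inv_of_mul_eq_one_left (by linear_combination hcu3)
          exact (cube_bij n hodd).injective h3
      · rintro (rfl | rfl)
        · have hβ0 : β = 0 := by
            apply sqInj
            show β ^ 2 = 0 ^ 2
            rw [hβ]; ring
          rw [hβ0]; ring
        · have hβval : β = c * u ^ 2 := by
            apply sqInj
            show β ^ 2 = (c * u ^ 2) ^ 2
            rw [hβ]
            linear_combination (-(c*u)) * hcu₀
          rw [hβval]
          exact add_self n _
    by_cases hcase : u = 0 ∨ u = u₀
    · rw [if_pos hcase]
      have h0 : β + c * u ^ 2 = 0 := hcond.mpr hcase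
      simp_rw [h0]
      exact sum_chi_mul_zero n hn0
    · rw [if_neg hcase]
      exact sum_chi_mul_ne n (fun h => hcase (hcond.mp h))
  -- expand the square
  have expand : Esum n c a ^ 2
      = ∑ u : F2 n, chi n (c * u ^ 3 + a * u)
          * (∑ z : F2 n, chi n (c * u * z ^ 2 + c * u ^ 2 * z)) := by
    rw [sq, Esum, Finset.sum_mul_sum]
    have swap : ∀ z : F2 n, ∑ w : F2 n,
        chi n (c * z ^ 3 + a * z) * chi n (c * w ^ 3 + a * w)
        = ∑ u : F2 n, chi n (c * u ^ 3 + a * u)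
            * chi n (c * u * z ^ 2 + c * u ^ 2 * z) := by
      intro z
      rw [← Equiv.sum_comp (Equiv.addLeft z)
        (fun w => chi n (c * z ^ 3 + a * z) * chi n (c * w ^ 3 + a * w))]
      apply Finset.sum_congr rfl
      intro u _
      simp only [Equiv.coe_addLeft]
      rw [← chi_add, ← chi_add]
      congr 1
      linear_combination (c * z ^ 3 + a * z + c * z ^ 2 * u + c * z * u ^ 2) * h2
    simp_rw [swap]
    rw [Finset.sum_comm]
    simp_rw [Finset.mul_sum]
  rw [expand]
  simp_rw [hT]
  have hne : (0 : F2 n) ≠ u₀ := fun h => hu₀ne h.symm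
  have hmem : ∀ u : F2 n, (if u = 0 ∨ u = u₀ then chi n (c * u ^ 3 + a * u) * (2:ℝ) ^ n else 0)
      = if u ∈ ({0, u₀} : Finset (F2 n)) then chi n (c * u ^ 3 + a * u) * 2 ^ n else 0 := by
    intro u; simp [Finset.mem_insert]
  have hpair : ∑ u : F2 n, chi n (c * u ^ 3 + a * u)
        * (if u = 0 ∨ u = u₀ then (2:ℝ) ^ n else 0)
      = (2:ℝ) ^ n * (1 - chi n (a * u₀)) := by
    simp_rw [mul_ite, mul_zero, hmem, Finset.sum_ite_mem, Finset.univ_inter]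
    rw [Finset.sum_pair hne]
    have e0 : c * 0 ^ 3 + a * 0 = 0 := by ring
    have e1 : c * u₀ ^ 3 + a * u₀ = 1 + a * u₀ := by rw [hcu₀]
    rw [e0, e1, chi_zero, chi_add, chi_one n hodd]
    ring
  rw [hpair]
  rcases chi_cases n (a * u₀) with h | h <;> rw [h]
  · left; ring
  · right; ring

end QUW


end

open QUW in

theorem stmt6 (t : ℕ) (ht : 0 < t) :
    ∃ W : Fin (2 ^ (2 * t + 1)) →
        Matrix (Fin (2 ^ (2 * t + 1))) (Fin (2 ^ (2 * t + 1))) ℝ,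
      MQUWM ((2 ^ (2 * t + 1) : ℕ) : ℝ) (((2 ^ (2 * t + 1) : ℕ) : ℝ) / 2)
        ((2 * 2 ^ (2 * t + 1) : ℕ) : ℝ) W := by
  classical
  set n := 2 * t + 1 with hn
  have hodd : Odd n := ⟨t, by omega⟩
  have hn0 : n ≠ 0 := by omega
  have hcard : Fintype.card (F2 n) = 2 ^ n := card_F2 n hn0
  set dR : ℝ := (2:ℝ) ^ n with hdR
  have hdRpos : 0 < dR := by positivity
  have hcast1 : ((2 ^ (2 * t + 1) : ℕ) : ℝ) = dR := by push_cast [hdR, hn]; ring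
  have hcast2 : ((2 * 2 ^ (2 * t + 1) : ℕ) : ℝ) = 2 * dR := by push_cast [hdR, hn]; ring
  let e : Fin (2 ^ (2 * t + 1)) ≃ F2 n := (Fintype.equivFinOfCardEq hcard).symm
  set W : Fin (2 ^ (2 * t + 1)) →
      Matrix (Fin (2 ^ (2 * t + 1))) (Fin (2 ^ (2 * t + 1))) ℝ :=
    fun i => Matrix.of fun x y => chi n (e x * e y + e i * (e y) ^ 3) with hW
  have h2 : (2 : F2 n) = 0 := char2 n
  -- the fundamental entry formula
  have entry : ∀ i j x y, (W i * (W j)ᵀ) x y = Esum n (e i + e j) (e x + e y) := by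
    intro i j x y
    rw [Matrix.mul_apply]
    have term : ∀ z, W i x z * (W j)ᵀ z y
        = chi n ((e i + e j) * (e z) ^ 3 + (e x + e y) * (e z)) := by
      intro z
      rw [Matrix.transpose_apply, hW]
      simp only [Matrix.of_apply]
      rw [← chi_add]
      congr 1
      ring
    simp_rw [term]
    exact Equiv.sum_comp e (fun w => chi n ((e i + e j) * w ^ 3 + (e x + e y) * w))
  -- each W i is Hadamard
  have hHad : ∀ i, W i * (W i)ᵀ = dR • (1 : Matrix _ _ ℝ) := by
    intro i
    ext x y
    rw [entry i i x y, add_self n (e i), Esum_zero n hn0]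
    rw [Matrix.smul_apply, Matrix.one_apply]
    by_cases hxy : x = y
    · rw [if_pos ((add_eq_zero_iff' n _ _).mpr (by rw [hxy])), if_pos hxy, smul_eq_mul, mul_one]
    · rw [if_neg (fun h => hxy (e.injective ((add_eq_zero_iff' n _ _).mp h))),
        if_neg hxy, smul_eq_mul, mul_zero]
  have hEnt : ∀ i x y, W i x y = -1 ∨ W i x y = 0 ∨ W i x y = 1 := by
    intro i x y
    rcases chi_cases n (e x * e y + e i * (e y) ^ 3) with h | h
    · exact Or.inr (Or.inr h)
    · exact Or.inl h
  have hWeighing : ∀ i, IsWeighing ((2 ^ (2 * t + 1) : ℕ) : ℝ) (W i) := by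
    intro i
    exact ⟨hEnt i, by rw [hcast1]; exact hHad i⟩
  refine ⟨W, hWeighing, ?_⟩
  intro i j hij
  set s : ℝ := Real.sqrt ((2 * 2 ^ (2 * t + 1) : ℕ) : ℝ) with hs
  have hss : s * s = 2 * dR := by
    rw [hs, ← hcast2]
    exact Real.mul_self_sqrt (by positivity)
  have hspos : 0 < s := by
    rw [hs, hcast2]
    exact Real.sqrt_pos.mpr (by positivity)
  have hc : e i + e j ≠ 0 := fun h => hij (e.injective ((add_eq_zero_iff' n _ _).mp h))
  constructor
  · -- entries
    intro x y
    rw [Matrix.smul_apply, entry i j x y, smul_eq_mul]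
    rcases Esum_sq n hodd hc (e x + e y) with hE | hE
    · have : Esum n (e i + e j) (e x + e y) = 0 := by
        exact pow_eq_zero_iff (n := 2) (by norm_num) |>.mp hE
      rw [this, mul_zero]
      exact Or.inr (Or.inl rfl)
    · set v : ℝ := s⁻¹ * Esum n (e i + e j) (e x + e y) with hv
      have hv2 : v * v = 1 := by
        rw [hv]
        have : s⁻¹ * Esum n (e i + e j) (e x + e y) * (s⁻¹ * Esum n (e i + e j) (e x + e y))
            = (s * s)⁻¹ * (Esum n (e i + e j) (e x + e y) ^ 2) := by ring
        rw [this, hss, hE]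
        field_simp
        exact hdR.symm
      rcases mul_self_eq_one_iff.mp hv2 with h | h
      · exact Or.inr (Or.inr h)
      · exact Or.inl h
  · -- the product
    have hWj' : (W j)ᵀ * W j = dR • (1 : Matrix _ _ ℝ) := by
      have h1 : W j * (dR⁻¹ • (W j)ᵀ) = 1 := by
        rw [Matrix.mul_smul, hHad j, smul_smul, inv_mul_cancel₀ (ne_of_gt hdRpos), one_smul]
      have h2' := mul_eq_one_comm.mp h1
      rw [Matrix.smul_mul] at h2'
      calc (W j)ᵀ * W j = dR • (dR⁻¹ • ((W j)ᵀ * W j)) := by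
            rw [smul_smul, mul_inv_cancel₀ (ne_of_gt hdRpos), one_smul]
      _ = dR • (1 : Matrix _ _ ℝ) := by rw [h2']
    have inner : W i * (W j)ᵀ * (W j * (W i)ᵀ) = (dR * dR) • (1 : Matrix _ _ ℝ) := by
      calc W i * (W j)ᵀ * (W j * (W i)ᵀ)
          = W i * ((W j)ᵀ * W j) * (W i)ᵀ := by rw [Matrix.mul_assoc, Matrix.mul_assoc,
              Matrix.mul_assoc]
        _ = dR • (dR • (1 : Matrix _ _ ℝ)) := by
            rw [hWj', Matrix.mul_smul, Matrix.mul_one, Matrix.smul_mul, hHad i]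
        _ = (dR * dR) • (1 : Matrix _ _ ℝ) := by rw [smul_smul]
    have expand : (s⁻¹ • (W i * (W j)ᵀ)) * (s⁻¹ • (W i * (W j)ᵀ))ᵀ
        = (s⁻¹ * s⁻¹ * (dR * dR)) • (1 : Matrix _ _ ℝ) := by
      rw [Matrix.transpose_smul, Matrix.transpose_mul, Matrix.transpose_transpose,
        Matrix.smul_mul, Matrix.mul_smul, smul_smul, inner, smul_smul]
    rw [expand]
    congr 1
    have : s⁻¹ * s⁻¹ = (2 * dR)⁻¹ := by
      rw [← hss]; rw [mul_inv]
    rw [this, hcast1]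
    field_simp
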